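/- Let λ ⊢ n have Frobenius coordinates (a₁,...,a_m | b₁,...,b_m), let k ≥ 1, set r = n − a₁ − 1/2, and assume k + r + 1 < n/2. Then the quantity MT = ((a₁ − 1/2)^{k↓}/n^{k↓}) · ∏_{j=2}^m (a₁ − a_j − k)/(a₁ − a_j) · ∏_{j=1}^m (a₁ + b_j)/(a₁ + b_j − k) satisfies MT ≤ exp(−k·r/n). -/

import Mathlib

/-- The `i`-th part of a partition (0-indexed, parts in decreasing order, `0` beyond the
number of parts). -/
def partNth (n : ℕ) (l : Nat.Partition n) (i : ℕ) : ℕ :=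
  ((l.parts.sort (· ≤ ·)).reverse.getD i 0)

/-- Diagonal length `m` of the partition: the number of `i` (0-indexed) with `λ_{i+1} ≥ i+1`. -/
def diagLen (n : ℕ) (l : Nat.Partition n) : ℕ :=
  ((Finset.range n).filter (fun i => i < partNth n l i)).card

/-- Number of parts of the conjugate partition `λ'` at 0-indexed position `i`, i.e.
`λ'_{i+1} = #{j : λ_j ≥ i+1}`. -/
def conjNth (n : ℕ) (l : Nat.Partition n) (i : ℕ) : ℕ :=
  ((Finset.range n).filter (fun j => i < partNth n l j)).card

/-- Frobenius coordinate `a_i = λ_i − i + 1/2` (1-indexed; here `i : ℕ` is 0-indexed). -/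
noncomputable def fA (n : ℕ) (l : Nat.Partition n) (i : ℕ) : ℝ :=
  (partNth n l i : ℝ) - i - 1/2

/-- Frobenius coordinate `b_i = λ′_i − i + 1/2` (1-indexed; here `i : ℕ` is 0-indexed). -/
noncomputable def fB (n : ℕ) (l : Nat.Partition n) (i : ℕ) : ℝ :=
  (conjNth n l i : ℝ) - i - 1/2

/-- The falling factorial `x^{k↓} = x(x−1)⋯(x−k+1)`. -/
noncomputable def fall (x : ℝ) (k : ℕ) : ℝ := ∏ i ∈ Finset.range k, (x - i)

/-- The main term in the asymptotic evaluation of the character ratio at a `k`-cycle: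
`MT = ((a₁ − 1/2)^{k↓}/n^{k↓}) · ∏_{j=2}^m (a₁−a_j−k)/(a₁−a_j) · ∏_{j=1}^m (a₁+b_j)/(a₁+b_j−k)`. -/
noncomputable def mainTerm (n k : ℕ) (l : Nat.Partition n) : ℝ :=
  (fall (fA n l 0 - 1/2) k / fall (n : ℝ) k) *
    (∏ j ∈ Finset.Ico 1 (diagLen n l), (fA n l 0 - fA n l j - k) / (fA n l 0 - fA n l j)) *
    (∏ j ∈ Finset.range (diagLen n l), (fA n l 0 + fB n l j) / (fA n l 0 + fB n l j - k))

/- ### auxiliary lemmas -/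
section Aux

lemma sum_getD (L : List ℕ) : ∑ i ∈ Finset.range L.length, L.getD i 0 = L.sum := by
  induction L with
  | nil => simp
  | cons a t ih =>
      rw [List.length_cons, Finset.sum_range_succ']
      simp only [List.getD_cons_succ, List.getD_cons_zero, List.sum_cons, ih]
      ring

lemma sum_getD_le (L : List ℕ) (N : ℕ) : ∑ i ∈ Finset.range N, L.getD i 0 ≤ L.sum := by
  rcases le_or_gt N L.length with hle | hlt
  · rw [← sum_getD L]
    exact Finset.sum_le_sum_of_subset (Finset.range_subset_range.2 hle)
  · rw [← sum_getD L]
    rw [show Finset.range N = Finset.range L.length ∪ Finset.Ico L.length N from by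
      rw [Finset.range_eq_Ico, Finset.range_eq_Ico, Finset.Ico_union_Ico_eq_Ico (Nat.zero_le _) hlt.le]]
    rw [Finset.sum_union (Finset.disjoint_left.2 (by intro a ha hb; simp at ha hb; omega))]
    have : ∑ i ∈ Finset.Ico L.length N, L.getD i 0 = 0 := by
      apply Finset.sum_eq_zero
      intro i hi
      exact List.getD_eq_default _ _ (Finset.mem_Ico.1 hi).1
    omega

lemma partNth_anti (n : ℕ) (l : Nat.Partition n) {i j : ℕ} (hij : i ≤ j) :
    partNth n l j ≤ partNth n l i := by
  set L := (l.parts.sort (· ≤ ·)).reverse with hL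
  have hs : L.Pairwise (· ≥ ·) := by
    rw [hL, List.pairwise_reverse]
    exact (Multiset.pairwise_sort l.parts (· ≤ ·)).imp (fun h => h)
  unfold partNth
  rcases lt_or_ge j L.length with hj | hj
  · have hi : i < L.length := lt_of_le_of_lt hij hj
    rw [List.getD_eq_getElem _ _ hj, List.getD_eq_getElem _ _ hi]
    rcases eq_or_lt_of_le hij with rfl | hlt
    · exact le_refl _
    · exact List.Pairwise.rel_get_of_lt hs (by exact hlt)
  · rw [List.getD_eq_default _ _ hj]
    exact Nat.zero_le _

lemma sum_partNth_le (n : ℕ) (l : Nat.Partition n) (N : ℕ) :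
    ∑ i ∈ Finset.range N, partNth n l i ≤ n := by
  unfold partNth
  calc _ ≤ ((l.parts.sort (· ≤ ·)).reverse).sum := sum_getD_le _ N
    _ = n := by
        rw [List.sum_reverse]
        rw [show ((l.parts.sort (· ≤ ·)).sum = l.parts.sum) from by
          rw [← Multiset.sum_coe, Multiset.sort_eq], l.parts_sum]

lemma partNth_pos (n : ℕ) (l : Nat.Partition n) {i : ℕ}
    (hi : i < (l.parts.sort (· ≤ ·)).length) : 0 < partNth n l i := by
  unfold partNth
  have hi' : i < (l.parts.sort (· ≤ ·)).reverse.length := by simpa using hi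
  rw [List.getD_eq_getElem _ _ hi']
  apply l.parts_pos
  have := List.getElem_mem hi'
  rw [List.mem_reverse] at this
  rwa [← Multiset.mem_sort (· ≤ ·)]

lemma partNth_eq_zero (n : ℕ) (l : Nat.Partition n) {i : ℕ}
    (hi : (l.parts.sort (· ≤ ·)).length ≤ i) : partNth n l i = 0 := by
  unfold partNth
  exact List.getD_eq_default _ _ (by simpa using hi)

lemma diagLen_le (n : ℕ) (l : Nat.Partition n) : diagLen n l ≤ n := by
  unfold diagLen
  calc _ ≤ (Finset.range n).card := Finset.card_filter_le _ _
    _ = n := Finset.card_range n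

lemma lt_partNth_of_lt_diagLen (n : ℕ) (l : Nat.Partition n) {j : ℕ} (hj : j < diagLen n l) :
    j < partNth n l j := by
  by_contra hc
  push_neg at hc
  have hsub : (Finset.range n).filter (fun i => i < partNth n l i) ⊆ Finset.range j := by
    intro i hi
    simp only [Finset.mem_filter, Finset.mem_range] at hi ⊢
    by_contra hij
    push_neg at hij
    have := partNth_anti n l hij
    omega
  have := Finset.card_le_card hsub
  rw [Finset.card_range] at this
  unfold diagLen at hj
  omega

lemma lt_conjNth_of_lt_diagLen (n : ℕ) (l : Nat.Partition n) {j : ℕ} (hj : j < diagLen n l) :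
    j < conjNth n l j := by
  have hjn : j < n := lt_of_lt_of_le hj (diagLen_le n l)
  have hsub : Finset.range (j+1) ⊆ (Finset.range n).filter (fun i => j < partNth n l i) := by
    intro i hi
    simp only [Finset.mem_range] at hi
    simp only [Finset.mem_filter, Finset.mem_range]
    constructor
    · omega
    · have h1 := lt_partNth_of_lt_diagLen n l hj
      have h2 := partNth_anti n l (show i ≤ j by omega)
      omega
  have := Finset.card_le_card hsub
  rw [Finset.card_range] at this
  unfold conjNth
  omega

lemma conjNth_le_length (n : ℕ) (l : Nat.Partition n) (i : ℕ) :
    conjNth n l i ≤ (l.parts.sort (· ≤ ·)).length := by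
  unfold conjNth
  calc _ ≤ (Finset.range (l.parts.sort (· ≤ ·)).length).card := by
        apply Finset.card_le_card
        intro j hj
        simp only [Finset.mem_filter, Finset.mem_range] at hj ⊢
        by_contra hc
        push_neg at hc
        have := partNth_eq_zero n l hc
        omega
    _ = _ := Finset.card_range _

lemma part0_add_length_le (n : ℕ) (l : Nat.Partition n) :
    partNth n l 0 + (l.parts.sort (· ≤ ·)).length ≤ n + 1 := by
  set q := (l.parts.sort (· ≤ ·)).length with hq
  rcases Nat.eq_zero_or_pos q with h0 | hpos
  · have := partNth_eq_zero n l (show q ≤ 0 by omega)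
    omega
  · have hsum := sum_partNth_le n l q
    have hsplit : ∑ i ∈ Finset.range q, partNth n l i
        = partNth n l 0 + ∑ i ∈ Finset.Ico 1 q, partNth n l i := by
      rw [Finset.range_eq_Ico, ← Finset.sum_Ico_consecutive _ (Nat.zero_le 1) hpos]
      simp
    have hlow : (q - 1) ≤ ∑ i ∈ Finset.Ico 1 q, partNth n l i := by
      calc (q-1) = ∑ _i ∈ Finset.Ico 1 q, 1 := by
            rw [Finset.sum_const, smul_eq_mul, mul_one, Nat.card_Ico]
        _ ≤ _ := by
            apply Finset.sum_le_sum
            intro i hi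
            exact partNth_pos n l (by rw [← hq]; exact (Finset.mem_Ico.1 hi).2)
    omega

lemma part0_add_part_le (n : ℕ) (l : Nat.Partition n) {j : ℕ} (hj : 1 ≤ j) :
    partNth n l 0 + partNth n l j ≤ n := by
  have hsum := sum_partNth_le n l (j+1)
  have heq : partNth n l 0 + partNth n l j = ∑ i ∈ ({0, j} : Finset ℕ), partNth n l i := by
    rw [Finset.sum_pair (by omega)]
  rw [heq]
  calc _ ≤ ∑ i ∈ Finset.range (j+1), partNth n l i := by
        apply Finset.sum_le_sum_of_subset
        intro i hi
        simp only [Finset.mem_insert, Finset.mem_singleton] at hi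
        simp only [Finset.mem_range]
        omega
    _ ≤ n := hsum

lemma length_pos (n : ℕ) (l : Nat.Partition n) (hn : 0 < n) :
    0 < (l.parts.sort (· ≤ ·)).length := by
  rw [Multiset.length_sort]
  by_contra hc
  push_neg at hc
  have hz : l.parts = 0 := by
    rwa [Nat.le_zero, Multiset.card_eq_zero] at hc
  have h2 := l.parts_sum
  rw [hz, Multiset.sum_zero] at h2
  omega

lemma diagLen_pos (n : ℕ) (l : Nat.Partition n) (hn : 0 < n) : 0 < diagLen n l := by
  have h0 : 0 < partNth n l 0 := partNth_pos n l (length_pos n l hn)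
  unfold diagLen
  rw [Finset.card_pos]
  exact ⟨0, by simp only [Finset.mem_filter, Finset.mem_range]; omega⟩

lemma fall_pos {x : ℝ} {k : ℕ} (hx : (k:ℝ) ≤ x) : 0 < fall x k := by
  unfold fall
  apply Finset.prod_pos
  intro i hi
  have : (i:ℝ) < k := by exact_mod_cast Finset.mem_range.1 hi
  linarith

lemma fall_succ_shift (x : ℝ) (k : ℕ) : fall (x - 1) k * x = fall x k * (x - k) := by
  unfold fall
  have h1 : ∏ i ∈ Finset.range (k+1), (x - i) = (∏ i ∈ Finset.range k, (x - 1 - i)) * x := by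
    rw [Finset.prod_range_succ']
    congr 1
    · apply Finset.prod_congr rfl
      intro i _
      push_cast
      ring
    · norm_num
  have h2 : ∏ i ∈ Finset.range (k+1), (x - i) = (∏ i ∈ Finset.range k, (x - i)) * (x - k) :=
    Finset.prod_range_succ _ _
  rw [← h1, h2]

lemma fall_sub_nat (x : ℝ) (k : ℕ) (c : ℕ) (h : ∀ s : ℕ, s < c → x - s ≠ 0) :
    fall (x - c) k = fall x k * ∏ s ∈ Finset.range c, ((x - s - k) / (x - s)) := by
  induction c with
  | zero => simp
  | succ c ih =>
      have hc : x - c ≠ 0 := h c (Nat.lt_succ_self c)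
      have ih' := ih (fun s hs => h s (Nat.lt_succ_of_lt hs))
      have step := fall_succ_shift (x - c) k
      have hxc : x - (c+1 : ℕ) = (x - c) - 1 := by push_cast; ring
      rw [hxc]
      have hkey : fall (x - c - 1) k = fall (x - c) k * ((x - c - k) / (x - c)) := by
        field_simp at step ⊢
        linarith [step]
      rw [hkey, ih', Finset.prod_range_succ]
      ring

end Aux

set_option maxHeartbeats 1600000

/-- **Lemma (main term bound).** Let `λ ⊢ n` have Frobenius coordinates `(a|b)`, `k ≥ 1`,
`r = n − a₁ − 1/2`, and assume `k + r + 1 < n/2`. Then `MT ≤ exp(−k·r/n)`. -/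
theorem mainTerm_le_exp (n k : ℕ) (hk : 1 ≤ k) (l : Nat.Partition n)
    (h : (k : ℝ) + ((n : ℝ) - fA n l 0 - 1/2) + 1 < (n : ℝ) / 2) :
    mainTerm n k l ≤ Real.exp (-(k : ℝ) * ((n : ℝ) - fA n l 0 - 1/2) / n) := by
  have ha0 : fA n l 0 = (partNth n l 0 : ℝ) - 1/2 := by unfold fA; push_cast; ring
  set p0 := partNth n l 0 with hp0def
  have hp0n : p0 ≤ n := by have := sum_partNth_le n l 1; simpa using this
  have hp0nR : (p0:ℝ) ≤ n := Nat.cast_le.2 hp0n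
  rw [ha0] at h ⊢
  have hk1 : (1:ℝ) ≤ k := by exact_mod_cast hk
  have hh : (k:ℝ) + ((n:ℝ) - p0) + 1 < n/2 := by linarith
  have hn4 : (4:ℝ) < n := by linarith
  have hn0 : 0 < n := by exact_mod_cast (show (0:ℝ) < n by linarith)
  set r := n - p0 with hrdef
  have hr : (r:ℝ) = (n:ℝ) - p0 := by rw [hrdef]; rw [Nat.cast_sub hp0n]
  have hbig : 2*(k:ℝ) + 2*(r:ℝ) + 2 < n := by rw [hr]; linarith
  set m := diagLen n l with hmdef
  have hm1 : 1 ≤ m := diagLen_pos n l hn0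
  set q := conjNth n l 0 with hqdef
  have hq1 : 1 ≤ q := lt_conjNth_of_lt_diagLen n l (show 0 < m from hm1)
  have hqr : q ≤ r + 1 := by
    have h1 := conjNth_le_length n l 0
    have h2 := part0_add_length_le n l
    omega
  set u := r - (q - 1) with hudef
  clear_value u q m r p0
  have hur : u ≤ r := by omega
  have hu : (u:ℝ) = (r:ℝ) - (q:ℝ) + 1 := by
    have h' : u + q = r + 1 := by omega
    have hcast := congrArg (Nat.cast : ℕ → ℝ) h'
    push_cast at hcast
    linarith
  -- positivity of fall n k
  have hkn : (k:ℝ) ≤ n := by linarith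
  have hfalln : 0 < fall (n:ℝ) k := fall_pos hkn
  -- first factor as product of ratios
  have hfall : fall ((n:ℝ) - ((r+1 : ℕ):ℝ)) k
      = fall (n:ℝ) k * ∏ s ∈ Finset.range (r+1), (((n:ℝ) - s - k)/((n:ℝ) - s)) := by
    apply fall_sub_nat
    intro s hs
    have hs' : (s:ℝ) < (r:ℝ) + 1 := by exact_mod_cast hs
    have : (0:ℝ) < (n:ℝ) - s := by linarith
    linarith
  have hx : (p0:ℝ) - 1/2 - 1/2 = (n:ℝ) - ((r+1 : ℕ):ℝ) := by push_cast; rw [hr]; ring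
  have hF : fall ((p0:ℝ) - 1/2 - 1/2) k / fall (n:ℝ) k
      = ∏ s ∈ Finset.range (r+1), (((n:ℝ) - s - k)/((n:ℝ) - s)) := by
    rw [hx, hfall, mul_comm, mul_div_assoc, div_self (ne_of_gt hfalln), mul_one]
  -- the leftover factor
  have hy0 : fA n l 0 + fB n l 0 = (n:ℝ) - u := by
    rw [ha0]; unfold fB
    rw [← hqdef]
    push_cast
    rw [hu, hr]
    ring
  -- φ bounds
  have hnrk : (0:ℝ) < (n:ℝ) - r - k := by linarith
  have hφpos : ∀ s ∈ Finset.range (r+1), 0 < ((n:ℝ) - s - k)/((n:ℝ) - s) := by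
    intro s hs
    have hs' : (s:ℝ) ≤ r := by exact_mod_cast Nat.lt_succ_iff.1 (Finset.mem_range.1 hs)
    apply div_pos <;> linarith
  have hφle : ∀ s ∈ Finset.range (r+1),
      ((n:ℝ) - s - k)/((n:ℝ) - s) ≤ Real.exp (-(k:ℝ)/n) := by
    intro s hs
    have hs' : (s:ℝ) ≤ r := by exact_mod_cast Nat.lt_succ_iff.1 (Finset.mem_range.1 hs)
    have hs0 : (0:ℝ) ≤ s := Nat.cast_nonneg s
    have h1 : ((n:ℝ) - s - k)/((n:ℝ) - s) ≤ ((n:ℝ) - k)/n := by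
      rw [div_le_div_iff₀ (by linarith) (by linarith)]
      nlinarith
    have h2 : ((n:ℝ) - k)/n = -(k:ℝ)/n + 1 := by field_simp; ring
    have h3 := Real.add_one_le_exp (-(k:ℝ)/n)
    linarith
  -- the main identity
  have hMT : mainTerm n k l =
      ((∏ s ∈ Finset.range (r+1), (((n:ℝ) - s - k)/((n:ℝ) - s)))
        * ((((p0:ℝ) - 1/2) + fB n l 0) / (((p0:ℝ) - 1/2) + fB n l 0 - k)))
      * ∏ j ∈ Finset.Ico 1 m,
          ((((p0:ℝ) - 1/2) - fA n l j - k) / (((p0:ℝ) - 1/2) - fA n l j)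
            * ((((p0:ℝ) - 1/2) + fB n l j) / (((p0:ℝ) - 1/2) + fB n l j - k))) := by
    have hsplit3 : ∏ j ∈ Finset.range m, (((p0:ℝ) - 1/2) + fB n l j) / (((p0:ℝ) - 1/2) + fB n l j - k)
        = ((((p0:ℝ) - 1/2) + fB n l 0) / (((p0:ℝ) - 1/2) + fB n l 0 - k))
          * ∏ j ∈ Finset.Ico 1 m, (((p0:ℝ) - 1/2) + fB n l j) / (((p0:ℝ) - 1/2) + fB n l j - k) := by
      rw [Finset.range_eq_Ico, ← Finset.prod_Ico_consecutive _ (Nat.zero_le 1) hm1]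
      congr 1
      rw [show Finset.Ico 0 1 = {0} from rfl, Finset.prod_singleton]
    unfold mainTerm
    rw [ha0, ← hmdef, hF, hsplit3, Finset.prod_mul_distrib]
    ring
  -- bounds on the paired product
  have hterm : ∀ j ∈ Finset.Ico 1 m,
      (0:ℝ) ≤ (((p0:ℝ) - 1/2) - fA n l j - k) / (((p0:ℝ) - 1/2) - fA n l j)
            * ((((p0:ℝ) - 1/2) + fB n l j) / (((p0:ℝ) - 1/2) + fB n l j - k)) ∧
      (((p0:ℝ) - 1/2) - fA n l j - k) / (((p0:ℝ) - 1/2) - fA n l j)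
            * ((((p0:ℝ) - 1/2) + fB n l j) / (((p0:ℝ) - 1/2) + fB n l j - k)) ≤ 1 := by
    intro j hj
    obtain ⟨hj1, hjm⟩ := Finset.mem_Ico.1 hj
    have hjm' : j < diagLen n l := by rw [← hmdef]; exact hjm
    have hpja : partNth n l j ≤ p0 := by rw [hp0def]; exact partNth_anti n l (Nat.zero_le j)
    have hsum2 : p0 + partNth n l j ≤ n := by rw [hp0def]; exact part0_add_part_le n l hj1
    have hcj : j < conjNth n l j := lt_conjNth_of_lt_diagLen n l hjm'
    have hpj : j < partNth n l j := lt_partNth_of_lt_diagLen n l hjm'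
    have c1 : ((partNth n l j : ℕ):ℝ) ≤ p0 := Nat.cast_le.2 hpja
    have c2 : (p0:ℝ) + ((partNth n l j : ℕ):ℝ) ≤ n := by exact_mod_cast Nat.cast_le.2 hsum2
    have c3 : (j:ℝ) + 1 ≤ ((conjNth n l j : ℕ):ℝ) := by exact_mod_cast Nat.cast_le.2 hcj
    have c4 : (j:ℝ) + 1 ≤ ((partNth n l j : ℕ):ℝ) := by exact_mod_cast Nat.cast_le.2 hpj
    have c5 : (1:ℝ) ≤ j := by exact_mod_cast hj1
    have hXpos : (0:ℝ) < ((p0:ℝ) - 1/2) - fA n l j := by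
      unfold fA; linarith only [c1, c5]
    have hXk : (0:ℝ) ≤ ((p0:ℝ) - 1/2) - fA n l j - k := by
      unfold fA; linarith only [c2, c5, hr, hbig]
    have hYpos : (0:ℝ) < ((p0:ℝ) - 1/2) + fB n l j := by
      unfold fB; linarith only [c3, hr, hbig, hk1]
    have hYk : (0:ℝ) < ((p0:ℝ) - 1/2) + fB n l j - k := by
      unfold fB; linarith only [c3, hr, hbig]
    have hYX : (1:ℝ) ≤ (((p0:ℝ) - 1/2) + fB n l j) - (((p0:ℝ) - 1/2) - fA n l j) := by
      unfold fA fB; linarith only [c3, c4]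
    have hprod : (0:ℝ) ≤ (k:ℝ) * ((((p0:ℝ) - 1/2) + fB n l j) - (((p0:ℝ) - 1/2) - fA n l j)) :=
      mul_nonneg (by linarith only [hk1]) (by linarith only [hYX])
    constructor
    · exact mul_nonneg (div_nonneg hXk hXpos.le) (div_nonneg hYpos.le hYk.le)
    · rw [div_mul_div_comm, div_le_one (mul_pos hXpos hYk)]
      have hexp : (((p0:ℝ) - 1/2) - fA n l j) * ((((p0:ℝ) - 1/2) + fB n l j) - k)
            - ((((p0:ℝ) - 1/2) - fA n l j) - k) * (((p0:ℝ) - 1/2) + fB n l j)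
          = k * ((((p0:ℝ) - 1/2) + fB n l j) - (((p0:ℝ) - 1/2) - fA n l j)) := by ring
      linarith only [hprod, hexp]
  have hPle : (∏ j ∈ Finset.Ico 1 m,
          ((((p0:ℝ) - 1/2) - fA n l j - k) / (((p0:ℝ) - 1/2) - fA n l j)
            * ((((p0:ℝ) - 1/2) + fB n l j) / (((p0:ℝ) - 1/2) + fB n l j - k)))) ≤ 1 :=
    Finset.prod_le_one (fun j hj => (hterm j hj).1) (fun j hj => (hterm j hj).2)
  have hPhipos : 0 < ∏ s ∈ Finset.range (r+1), (((n:ℝ) - s - k)/((n:ℝ) - s)) :=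
    Finset.prod_pos hφpos
  have huR : (u:ℝ) ≤ r := Nat.cast_le.2 hur
  have hy0' : ((p0:ℝ) - 1/2) + fB n l 0 = (n:ℝ) - u := by rw [← ha0]; exact hy0
  have hnu : (0:ℝ) < (n:ℝ) - u := by linarith only [huR, hbig, hk1]
  have hnuk : (0:ℝ) < (n:ℝ) - u - k := by linarith only [huR, hbig]
  have hL0pos : (0:ℝ) < (((p0:ℝ) - 1/2) + fB n l 0) / (((p0:ℝ) - 1/2) + fB n l 0 - k) := by
    rw [hy0']
    exact div_pos hnu hnuk
  have humem : u ∈ Finset.range (r+1) := Finset.mem_range.2 (by omega)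
  calc mainTerm n k l
      = ((∏ s ∈ Finset.range (r+1), (((n:ℝ) - s - k)/((n:ℝ) - s)))
          * ((((p0:ℝ) - 1/2) + fB n l 0) / (((p0:ℝ) - 1/2) + fB n l 0 - k)))
        * ∏ j ∈ Finset.Ico 1 m,
            ((((p0:ℝ) - 1/2) - fA n l j - k) / (((p0:ℝ) - 1/2) - fA n l j)
              * ((((p0:ℝ) - 1/2) + fB n l j) / (((p0:ℝ) - 1/2) + fB n l j - k))) := hMT
    _ ≤ ((∏ s ∈ Finset.range (r+1), (((n:ℝ) - s - k)/((n:ℝ) - s)))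
          * ((((p0:ℝ) - 1/2) + fB n l 0) / (((p0:ℝ) - 1/2) + fB n l 0 - k))) * 1 :=
        mul_le_mul_of_nonneg_left hPle (mul_nonneg hPhipos.le hL0pos.le)
    _ = ∏ s ∈ (Finset.range (r+1)).erase u, (((n:ℝ) - s - k)/((n:ℝ) - s)) := by
        rw [mul_one, hy0', ← Finset.mul_prod_erase _ _ humem]
        have hcancel : (((n:ℝ) - u - k)/((n:ℝ) - u)) * (((n:ℝ) - u)/((n:ℝ) - u - k)) = 1 := by
          field_simp
        calc ((((n:ℝ) - u - k)/((n:ℝ) - u))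
                * ∏ s ∈ (Finset.range (r+1)).erase u, (((n:ℝ) - s - k)/((n:ℝ) - s)))
              * (((n:ℝ) - u)/((n:ℝ) - u - k))
            = ((((n:ℝ) - u - k)/((n:ℝ) - u)) * (((n:ℝ) - u)/((n:ℝ) - u - k)))
              * ∏ s ∈ (Finset.range (r+1)).erase u, (((n:ℝ) - s - k)/((n:ℝ) - s)) := by ring
          _ = _ := by rw [hcancel, one_mul]
    _ ≤ ∏ _s ∈ (Finset.range (r+1)).erase u, Real.exp (-(k:ℝ)/n) :=
        Finset.prod_le_prod (fun s hs => (hφpos s (Finset.mem_of_mem_erase hs)).le)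
          (fun s hs => hφle s (Finset.mem_of_mem_erase hs))
    _ = Real.exp (-(k:ℝ) * ((n:ℝ) - ((p0:ℝ) - 1/2) - 1/2) / n) := by
        rw [Finset.prod_const, Finset.card_erase_of_mem humem, Finset.card_range]
        rw [show r + 1 - 1 = r from rfl]
        rw [← Real.exp_nat_mul]
        congr 1
        rw [hr]
        ring
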